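/- Let Δ ≥ 4 be an integer and define F(i,j) = (4Δ−6)(1/i + 1/j) + Δ² − 6Δ + 3 + 6/Δ − (i−j)². Then for every integer i with 3 ≤ i ≤ ⌊(Δ+3)/2⌋, one has the strict inequality (Δ−1)·F(i,Δ) > F(Δ,Δ), where F(Δ,Δ) = 2(4Δ−6)/Δ + Δ² − 6Δ + 3 + 6/Δ. -/
import Mathlib


/-- The dual slack function. -/
noncomputable def F (Δ i j : ℕ) : ℝ :=
  (4 * (Δ : ℝ) - 6) * (1 / (i : ℝ) + 1 / (j : ℝ))
    + (Δ : ℝ) ^ 2 - 6 * (Δ : ℝ) + 3 + 6 / (Δ : ℝ) - ((i : ℝ) - (j : ℝ)) ^ 2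

/-- For `3 ≤ i ≤ ⌊(Δ+3)/2⌋` one has `(Δ−1)·F(i,Δ) > F(Δ,Δ)`,
where `F(Δ,Δ) = 2(4Δ−6)/Δ + Δ² − 6Δ + 3 + 6/Δ`. -/
theorem Delta_sub_one_mul_F_gt (Δ : ℕ) (hΔ : 4 ≤ Δ) (i : ℕ)
    (hi3 : 3 ≤ i) (hit : i ≤ (Δ + 3) / 2) :
    ((Δ : ℝ) - 1) * F Δ i Δ > F Δ Δ Δ
      ∧ F Δ Δ Δ = 2 * (4 * (Δ : ℝ) - 6) / (Δ : ℝ)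
          + (Δ : ℝ) ^ 2 - 6 * (Δ : ℝ) + 3 + 6 / (Δ : ℝ) := by
  set d : ℝ := (Δ : ℝ) with hd
  set x : ℝ := (i : ℝ) with hx
  have hdn : (4 : ℝ) ≤ d := by rw [hd]; exact_mod_cast hΔ
  have hxn : (3 : ℝ) ≤ x := by rw [hx]; exact_mod_cast hi3
  have h2n : 2 * x ≤ d + 3 := by
    have : 2 * i ≤ Δ + 3 := by
      have := (Nat.le_div_iff_mul_le (by norm_num : 0 < 2)).mp hit
      omega
    rw [hx, hd]; exact_mod_cast this
  have hd0 : (0 : ℝ) < d := by linarith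
  have hx0 : (0 : ℝ) < x := by linarith
  have hd0' : d ≠ 0 := ne_of_gt hd0
  have hx0' : x ≠ 0 := ne_of_gt hx0
  constructor
  · set b : ℝ := x - 3 with hb
    set c : ℝ := d + 3 - 2 * x with hc
    have hbn : 0 ≤ b := by simp [hb]; linarith
    have hcn : 0 ≤ c := by simp [hc]; linarith
    have hid : ((d - 1) * F Δ i Δ - F Δ Δ Δ) * (x * d)
        = 12 * (d - 3) + 6 * c + 11 * c ^ 2 + c ^ 3 + 68 * b * c + 31 * b * c ^ 2
          + 5 * b * c ^ 3 + 74 * b ^ 2 + 109 * b ^ 2 * c + 37 * b ^ 2 * c ^ 2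
          + 2 * b ^ 2 * c ^ 3 + 96 * b ^ 3 + 83 * b ^ 3 * c + 11 * b ^ 3 * c ^ 2
          + 58 * b ^ 4 + 20 * b ^ 4 * c + 12 * b ^ 5 := by
      unfold F
      rw [hb, hc, ← hd, ← hx]
      field_simp
      ring
    have hb2 : 0 ≤ b ^ 2 := sq_nonneg b
    have hb3 : 0 ≤ b ^ 3 := by positivity
    have hb4 : 0 ≤ b ^ 4 := by positivity
    have hb5 : 0 ≤ b ^ 5 := by positivity
    have hc2 : 0 ≤ c ^ 2 := sq_nonneg c
    have hc3 : 0 ≤ c ^ 3 := by positivity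
    have t1 : 0 ≤ b * c := mul_nonneg hbn hcn
    have t2 : 0 ≤ b * c ^ 2 := mul_nonneg hbn hc2
    have t3 : 0 ≤ b * c ^ 3 := mul_nonneg hbn hc3
    have t4 : 0 ≤ b ^ 2 * c := mul_nonneg hb2 hcn
    have t5 : 0 ≤ b ^ 2 * c ^ 2 := mul_nonneg hb2 hc2
    have t6 : 0 ≤ b ^ 2 * c ^ 3 := mul_nonneg hb2 hc3
    have t7 : 0 ≤ b ^ 3 * c := mul_nonneg hb3 hcn
    have t8 : 0 ≤ b ^ 3 * c ^ 2 := mul_nonneg hb3 hc2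
    have t9 : 0 ≤ b ^ 4 * c := mul_nonneg hb4 hcn
    have hG : 0 < ((d - 1) * F Δ i Δ - F Δ Δ Δ) * (x * d) := by
      rw [hid]; linarith
    have hxd : 0 < x * d := mul_pos hx0 hd0
    nlinarith [hG, hxd]
  · unfold F
    rw [← hd]
    field_simp
    ring
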